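/- Suppose {D₁,…,Dₘ} is a nontrivial (v,m,k,λ)-SEDF in an abelian group G with m > 2, having the simple character value property with respect to (a,b). Then the number of nonprincipal characters χ with χ(D) = 0 equals (v−1)·(1 − (b²−a²)(v−km)m / (4a²k(m−1))), the number with χ(D₁) = ((a+b)/(2a))χ(D) ≠ 0 equals (v−1)(v−km)(b²−a²)((b−a)m+2a)/(8a²bk(m−1)), and the number with χ(D₁) = ((a−b)/(2a))χ(D) ≠ 0 equals (v−1)(v−km)(b²−a²)((b+a)m−2a)/(8a²bk(m−1)); all three quantities are non-negative integers. -/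

import Mathlib

open Finset

/-- `{D j}` is a `(v, m, k, lam)`-strong external difference family in the
abelian group `G`: mutually disjoint `k`-subsets whose defining group-ring
identity `D_j · (∑_{i≠j} D_i^{(-1)}) = lam (G - 1)` holds in `ℤ[G]`. -/
def IsSEDF {G : Type} [CommGroup G] [Fintype G] [DecidableEq G]
    (v m k lam : ℕ) (D : Fin m → Finset G) : Prop :=
  Fintype.card G = v ∧ 2 ≤ m ∧ (∀ i, (D i).card = k) ∧
  (∀ i j, i ≠ j → Disjoint (D i) (D j)) ∧
  ∀ j, (∑ d ∈ D j, MonoidAlgebra.of ℤ G d) *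
      (∑ i ∈ Finset.univ.erase j, ∑ d ∈ D i, MonoidAlgebra.of ℤ G d⁻¹)
    = (lam : ℤ) • ((∑ g : G, MonoidAlgebra.of ℤ G g) - 1)

/-- The simple character value property with respect to `(a, b)`. -/
def SCVP {G : Type} [CommGroup G] [Fintype G] [DecidableEq G]
    (lam : ℕ) (DU : Finset G) (a b : ℕ) : Prop :=
  ∀ χ : G →* ℂ, χ ≠ 1 → (∑ d ∈ DU, χ d) ≠ 0 →
    Real.sqrt (1 + 4 * lam / ‖∑ d ∈ DU, χ d‖ ^ 2) = (b : ℝ) / a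

open Finset

section CharBasics

lemma charSum_eq_zero {H : Type*} [CommGroup H] [Fintype H] {χ : H →* ℂ} (hχ : χ ≠ 1) :
    ∑ g : H, χ g = 0 := by
  obtain ⟨h, hh⟩ := DFunLike.ne_iff.mp hχ
  simp only [MonoidHom.one_apply] at hh
  have key : χ h * ∑ g : H, χ g = ∑ g : H, χ g := by
    rw [Finset.mul_sum]
    refine Fintype.sum_bijective (fun g => h * g) (Group.mulLeft_bijective h) _ _ (fun g => ?_)
    rw [map_mul]
  have h0 : (χ h - 1) * ∑ g : H, χ g = 0 := by ring_nf; linear_combination key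
  rcases mul_eq_zero.mp h0 with h1 | h2
  · exact absurd (by linear_combination h1) hh
  · exact h2

variable {G : Type} [CommGroup G] [Fintype G]

/-- characters into `ℂ` vs into `ℂˣ`. -/
def charEquiv (G : Type) [CommGroup G] : (G →* ℂ) ≃ (G →* ℂˣ) where
  toFun χ := χ.toHomUnits
  invFun ψ := (Units.coeHom ℂ).comp ψ
  left_inv χ := by ext g; simp
  right_inv ψ := by ext g; simp [Units.ext_iff]

instance : Finite (G →* ℂˣ) := by
  classical
  have : NeZero (Fintype.card G) := ⟨Fintype.card_ne_zero⟩
  have hf : ∀ (ψ : G →* ℂˣ) (g : G), ψ g ∈ rootsOfUnity (Fintype.card G) ℂ := by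
    intro ψ g
    rw [mem_rootsOfUnity, ← map_pow, pow_card_eq_one, map_one]
  let f : (G →* ℂˣ) → (G → rootsOfUnity (Fintype.card G) ℂ) :=
    fun ψ g => ⟨ψ g, hf ψ g⟩
  have hinj : Function.Injective f := by
    intro ψ₁ ψ₂ hp
    ext g
    have := congrFun hp g
    simpa [f, Subtype.ext_iff, Units.ext_iff] using this
  exact Finite.of_injective f hinj

instance : Finite (G →* ℂ) := Finite.of_equiv _ (charEquiv G).symm

lemma enough : HasEnoughRootsOfUnity ℂ (Monoid.exponent G) := by
  have : NeZero ((Monoid.exponent G : ℂ)) :=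
    ⟨by exact_mod_cast Monoid.exponent_ne_zero_of_finite⟩
  infer_instance

lemma card_char : Nat.card (G →* ℂ) = Fintype.card G := by
  have := enough (G := G)
  rw [Nat.card_congr (charEquiv G),
    Nat.card_congr (CommGroup.monoidHom_mulEquiv_of_hasEnoughRootsOfUnity G ℂ).some.toEquiv,
    Nat.card_eq_fintype_card]

end CharBasics

section Orthog

variable {G : Type} [CommGroup G] [Fintype G] [DecidableEq G] [Fintype (G →* ℂ)]

lemma dual_sum (g : G) :
    ∑ χ : G →* ℂ, χ g = if g = 1 then (Fintype.card G : ℂ) else 0 := by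
  split_ifs with hg
  · subst hg
    simp only [map_one, Finset.sum_const, Finset.card_univ, nsmul_eq_mul, mul_one]
    rw [← Nat.card_eq_fintype_card (α := G →* ℂ), card_char]
  · have := enough (G := G)
    letI : Fintype (G →* ℂˣ) := Fintype.ofEquiv _ (charEquiv G)
    obtain ⟨ψ₀, hψ₀⟩ := CommGroup.exists_apply_ne_one_of_hasEnoughRootsOfUnity G ℂ hg
    let φ : (G →* ℂˣ) →* ℂ :=
      { toFun := fun ψ => (ψ g : ℂ)
        map_one' := by simp
        map_mul' := by intro ψ₁ ψ₂; simp }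
    have hφ : φ ≠ 1 := by
      refine DFunLike.ne_iff.mpr ⟨ψ₀, ?_⟩
      simp only [MonoidHom.one_apply, φ, MonoidHom.coe_mk, OneHom.coe_mk]
      intro hc
      exact hψ₀ (Units.ext_iff.mpr hc)
    have h0 : ∑ ψ : G →* ℂˣ, φ ψ = 0 := charSum_eq_zero hφ
    calc ∑ χ : G →* ℂ, χ g = ∑ ψ : G →* ℂˣ, ((charEquiv G).symm ψ) g :=
          Fintype.sum_equiv (charEquiv G) _ _ (fun χ => by rw [Equiv.symm_apply_apply])
      _ = 0 := by
          simpa only [charEquiv, Equiv.coe_fn_symm_mk, MonoidHom.coe_comp,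
            Function.comp_apply, Units.coeHom_apply] using (show ∑ ψ : G →* ℂˣ, (ψ g : ℂ) = 0 from h0)

lemma orthog (A B : Finset G) :
    ∑ χ : G →* ℂ, (∑ d ∈ A, χ d) * (∑ e ∈ B, χ e⁻¹)
      = (Fintype.card G : ℂ) * (A ∩ B).card := by
  classical
  have h1 : ∀ χ : G →* ℂ, (∑ d ∈ A, χ d) * (∑ e ∈ B, χ e⁻¹)
      = ∑ d ∈ A, ∑ e ∈ B, χ (d * e⁻¹) := by
    intro χ
    rw [Finset.sum_mul_sum]
    simp [map_mul]
  simp_rw [h1]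
  rw [Finset.sum_comm]
  have h2 : ∀ d ∈ A, ∑ e ∈ B, ∑ χ : G →* ℂ, χ (d * e⁻¹)
      = ∑ e ∈ B, if d = e then (Fintype.card G : ℂ) else 0 := by
    intro d _
    refine Finset.sum_congr rfl fun e _ => ?_
    rw [dual_sum]
    congr 1
    simp [mul_inv_eq_one]
  calc ∑ d ∈ A, ∑ χ : G →* ℂ, ∑ e ∈ B, χ (d * e⁻¹)
      = ∑ d ∈ A, ∑ e ∈ B, ∑ χ : G →* ℂ, χ (d * e⁻¹) := by
        refine Finset.sum_congr rfl fun d _ => Finset.sum_comm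
    _ = ∑ d ∈ A, if d ∈ B then (Fintype.card G : ℂ) else 0 := by
        refine Finset.sum_congr rfl fun d hd => ?_
        rw [h2 d hd]
        simp [Finset.sum_ite_eq]
    _ = (Fintype.card G : ℂ) * (A ∩ B).card := by
        rw [Finset.sum_ite_mem, Finset.sum_const]
        simp [mul_comm]

end Orthog

section Apply
variable {G : Type} [CommGroup G] [Fintype G]

lemma sum_inv_eq_conj (χ : G →* ℂ) (A : Finset G) :
    ∑ d ∈ A, χ d⁻¹ = (starRingEnd ℂ) (∑ d ∈ A, χ d) := by
  rw [map_sum]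
  refine Finset.sum_congr rfl fun d _ => ?_
  have h1 : χ d ^ Fintype.card G = 1 := by rw [← map_pow, pow_card_eq_one, map_one]
  have habs : ‖χ d‖ = 1 :=
    Complex.norm_eq_one_of_pow_eq_one h1 Fintype.card_ne_zero
  rw [map_inv, Complex.inv_eq_conj habs]

lemma char_sedf {m lam : ℕ} {D : Fin m → Finset G}
    (h5 : ∀ j, (∑ d ∈ D j, MonoidAlgebra.of ℤ G d) *
      (∑ i ∈ Finset.univ.erase j, ∑ d ∈ D i, MonoidAlgebra.of ℤ G d⁻¹)
    = (lam : ℤ) • ((∑ g : G, MonoidAlgebra.of ℤ G g) - 1))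
    (χ : G →* ℂ) (j : Fin m) :
    (∑ d ∈ D j, χ d) * (∑ i ∈ Finset.univ.erase j, ∑ d ∈ D i, χ d⁻¹)
      = (lam : ℂ) * ((∑ g : G, χ g) - 1) := by
  have := congrArg (MonoidAlgebra.lift ℤ ℂ G χ) (h5 j)
  simpa [map_sum, map_mul, MonoidAlgebra.lift_of, zsmul_eq_mul] using this

end Apply

lemma quadratic_roots {S S0 : ℂ} {lam a b : ℝ} (ha : 0 < a)
    (hS : S ≠ 0)
    (heq : S0 * ((starRingEnd ℂ) S - (starRingEnd ℂ) S0) = -(lam : ℂ))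
    (habs : ‖S‖ ^ 2 * (b ^ 2 - a ^ 2) = 4 * a ^ 2 * lam) :
    S0 = (((a : ℂ) + b) / (2 * a)) * S ∨ S0 = (((a : ℂ) - b) / (2 * a)) * S := by
  set c : ℝ := ‖S‖ ^ 2 with hc
  have hc0 : 0 < c := by
    have := norm_pos_iff.mpr hS
    positivity
  have hcS : S * (starRingEnd ℂ) S = (c : ℂ) := by
    rw [Complex.mul_conj, hc, Complex.sq_norm]
  have hreal : S0 * (starRingEnd ℂ) S = ((Complex.normSq S0 - lam : ℝ) : ℂ) := by
    push_cast
    rw [← Complex.mul_conj S0]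
    linear_combination heq
  set u : ℝ := (Complex.normSq S0 - lam) / c with hu
  have hS0 : S0 = (u : ℂ) * S := by
    have hcne : (c : ℂ) ≠ 0 := by exact_mod_cast hc0.ne'
    rw [hu]
    push_cast
    rw [div_mul_eq_mul_div, eq_div_iff hcne]
    calc S0 * (c : ℂ) = (S0 * (starRingEnd ℂ) S) * S := by
          rw [← hcS]; ring
      _ = ((Complex.normSq S0 : ℂ) - (lam : ℂ)) * S := by rw [hreal]; push_cast; ring
  have hquad : c * u ^ 2 - c * u - lam = 0 := by
    have h2 : ((u : ℂ) * S) * ((starRingEnd ℂ) S - (starRingEnd ℂ) ((u : ℂ) * S)) = -(lam : ℂ) := by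
      rw [← hS0]; exact heq
    have h3 : (u : ℂ) * (c : ℂ) - (u : ℂ) ^ 2 * (c : ℂ) = -(lam : ℂ) := by
      rw [map_mul, Complex.conj_ofReal] at h2
      linear_combination h2 - (u - u ^ 2) * hcS
    have h4 : u * c - u ^ 2 * c = -lam := by exact_mod_cast h3
    linarith
  have hfact : (u - (a + b) / (2 * a)) * (u - (a - b) / (2 * a)) = 0 := by
    have ha' : (a : ℝ) ≠ 0 := ha.ne'
    have hc' : c ≠ 0 := hc0.ne'
    field_simp
    nlinarith [hquad, habs, hc0]
  rcases mul_eq_zero.mp hfact with h | h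
  · left
    rw [sub_eq_zero] at h
    rw [hS0, h]
    push_cast
    ring
  · right
    rw [sub_eq_zero] at h
    rw [hS0, h]
    push_cast
    ring

set_option maxHeartbeats 2000000 in
theorem sedf_scvp_character_counts {G : Type} [CommGroup G] [Fintype G]
    [DecidableEq G] {v m k lam : ℕ} (D : Fin m → Finset G)
    (h : IsSEDF v m k lam D) (hk : 1 < k) (hm : 2 < m)
    (a b : ℕ) (ha : 0 < a) (hab : a < b) (hco : Nat.Coprime a b)
    (hscvp : SCVP lam (Finset.univ.biUnion D) a b) :
    (Nat.card {χ : G →* ℂ // χ ≠ 1 ∧ ∑ d ∈ Finset.univ.biUnion D, χ d = 0} : ℚ)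
      = ((v : ℚ) - 1) *
          (1 - ((b : ℚ) ^ 2 - a ^ 2) * ((v : ℚ) - k * m) * m / (4 * a ^ 2 * k * (m - 1))) ∧
    (Nat.card {χ : G →* ℂ // χ ≠ 1 ∧ (∑ d ∈ Finset.univ.biUnion D, χ d) ≠ 0 ∧
        ∑ d ∈ D ⟨0, by omega⟩, χ d
          = (((a : ℂ) + b) / (2 * a)) * ∑ d ∈ Finset.univ.biUnion D, χ d} : ℚ)
      = ((v : ℚ) - 1) * ((v : ℚ) - k * m) * ((b : ℚ) ^ 2 - a ^ 2) *
          (((b : ℚ) - a) * m + 2 * a) / (8 * a ^ 2 * b * k * (m - 1)) ∧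
    (Nat.card {χ : G →* ℂ // χ ≠ 1 ∧ (∑ d ∈ Finset.univ.biUnion D, χ d) ≠ 0 ∧
        ∑ d ∈ D ⟨0, by omega⟩, χ d
          = (((a : ℂ) - b) / (2 * a)) * ∑ d ∈ Finset.univ.biUnion D, χ d} : ℚ)
      = ((v : ℚ) - 1) * ((v : ℚ) - k * m) * ((b : ℚ) ^ 2 - a ^ 2) *
          (((b : ℚ) + a) * m - 2 * a) / (8 * a ^ 2 * b * k * (m - 1)) := by
  classical
  letI : Fintype (G →* ℂ) := Fintype.ofFinite _
  obtain ⟨hv, hm2, hcard, hdisj, heqn⟩ := h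
  have hk0 : (k : ℂ) ≠ 0 := Nat.cast_ne_zero.mpr (by omega)
  have haC : (a : ℂ) ≠ 0 := Nat.cast_ne_zero.mpr ha.ne'
  have hbC : (b : ℂ) ≠ 0 := Nat.cast_ne_zero.mpr (by omega)
  set j0 : Fin m := ⟨0, by omega⟩ with hj0
  set DU : Finset G := Finset.univ.biUnion D with hDUdef
  have hscvp' : ∀ χ : G →* ℂ, χ ≠ 1 → (∑ d ∈ DU, χ d) ≠ 0 →
      Real.sqrt (1 + 4 * lam / ‖∑ d ∈ DU, χ d‖ ^ 2) = (b : ℝ) / a := hscvp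
  have hpd : ((Finset.univ : Finset (Fin m)) : Set (Fin m)).PairwiseDisjoint D :=
    fun i _ j _ hij => hdisj i j hij
  have hDUcard : DU.card = m * k := by
    rw [hDUdef, Finset.card_biUnion (fun i _ j _ hij => hdisj i j hij)]
    simp [hcard, Finset.sum_const, Finset.card_univ, mul_comm]
  have hsub : D j0 ⊆ DU := hDUdef ▸ Finset.subset_biUnion_of_mem D (Finset.mem_univ j0)
  have hvkm : m * k ≤ v := by
    have h1 := Finset.card_le_univ DU
    omega
  have hv2 : 2 ≤ v := by
    have : 3 * 2 ≤ m * k := Nat.mul_le_mul (by omega) (by omega)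
    omega
  have hm1C : (m : ℂ) - 1 ≠ 0 := by
    have : ((m : ℂ) - 1) = ((m - 1 : ℕ) : ℂ) := by
      push_cast [Nat.cast_sub (by omega : 1 ≤ m)]; ring
    rw [this]
    exact Nat.cast_ne_zero.mpr (by omega)
  have hv1C : (v : ℂ) - 1 ≠ 0 := by
    have : ((v : ℂ) - 1) = ((v - 1 : ℕ) : ℂ) := by
      push_cast [Nat.cast_sub (by omega : 1 ≤ v)]; ring
    rw [this]
    exact Nat.cast_ne_zero.mpr (by omega)
  have hbaC : (b : ℂ) ^ 2 - (a : ℂ) ^ 2 ≠ 0 := by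
    have hlt : a ^ 2 < b ^ 2 := Nat.pow_lt_pow_left hab (by norm_num)
    have : ((b : ℂ) ^ 2 - (a : ℂ) ^ 2) = ((b ^ 2 - a ^ 2 : ℕ) : ℂ) := by
      push_cast [Nat.cast_sub hlt.le]; ring
    rw [this]
    exact Nat.cast_ne_zero.mpr (by omega)
  -- the character equation
  have chareq : ∀ χ : G →* ℂ,
      (∑ d ∈ D j0, χ d) * ((starRingEnd ℂ) (∑ d ∈ DU, χ d)
        - (starRingEnd ℂ) (∑ d ∈ D j0, χ d))
      = (lam : ℂ) * ((∑ g : G, χ g) - 1) := by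
    intro χ
    have h1 := char_sedf heqn χ j0
    have h3 : ∑ d ∈ DU, χ d⁻¹ = ∑ i : Fin m, ∑ d ∈ D i, χ d⁻¹ := by
      rw [hDUdef]; exact Finset.sum_biUnion hpd
    have h4 := Finset.sum_erase_add Finset.univ
      (fun i => ∑ d ∈ D i, χ d⁻¹) (Finset.mem_univ j0)
    have h2 : ∑ i ∈ Finset.univ.erase j0, ∑ d ∈ D i, χ d⁻¹
        = (starRingEnd ℂ) (∑ d ∈ DU, χ d) - (starRingEnd ℂ) (∑ d ∈ D j0, χ d) := by
      rw [← sum_inv_eq_conj, ← sum_inv_eq_conj]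
      have h5 : ∑ i ∈ Finset.univ.erase j0, ∑ d ∈ D i, χ d⁻¹ + ∑ d ∈ D j0, χ d⁻¹
          = ∑ d ∈ DU, χ d⁻¹ := by rw [h3]; exact h4
      linear_combination h5
    rw [h2] at h1
    exact h1
  have chareqNP : ∀ χ : G →* ℂ, χ ≠ 1 →
      (∑ d ∈ D j0, χ d) * ((starRingEnd ℂ) (∑ d ∈ DU, χ d)
        - (starRingEnd ℂ) (∑ d ∈ D j0, χ d)) = -(lam : ℂ) := by
    intro χ hχ
    have := chareq χ
    rw [charSum_eq_zero hχ] at this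
    rw [this]; ring
  -- principal character values
  have hS0one : (∑ d ∈ D j0, (1 : G →* ℂ) d) = (k : ℂ) := by
    simp [MonoidHom.one_apply, hcard j0]
  have hSone : (∑ d ∈ DU, (1 : G →* ℂ) d) = (m : ℂ) * k := by
    simp only [MonoidHom.one_apply, Finset.sum_const, nsmul_eq_mul, mul_one]
    rw [hDUcard]; push_cast; ring
  have hGone : (∑ g : G, (1 : G →* ℂ) g) = (v : ℂ) := by
    simp [MonoidHom.one_apply, Finset.card_univ, hv]
  -- E4
  have hE4 : (k : ℂ) * ((m : ℂ) * k - k) = (lam : ℂ) * ((v : ℂ) - 1) := by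
    have h1 := chareq 1
    rw [hS0one, hSone, hGone] at h1
    rw [map_mul, map_natCast, map_natCast] at h1
    linear_combination h1
  have hlamne : lam ≠ 0 := by
    intro h0
    rw [h0] at hE4
    push_cast at hE4
    have : (k : ℂ) * (k : ℂ) * ((m : ℂ) - 1) = 0 := by linear_combination hE4
    rcases mul_eq_zero.mp this with h | h
    · exact hk0 (by rcases mul_eq_zero.mp h with h | h <;> exact h)
    · exact hm1C h
  have hlamC : (lam : ℂ) ≠ 0 := Nat.cast_ne_zero.mpr hlamne
  -- per-character absolute value (real)
  have hval : ∀ χ : G →* ℂ, χ ≠ 1 → (∑ d ∈ DU, χ d) ≠ 0 →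
      ‖∑ d ∈ DU, χ d‖ ^ 2 * ((b : ℝ) ^ 2 - (a : ℝ) ^ 2)
        = 4 * (a : ℝ) ^ 2 * (lam : ℝ) := by
    intro χ hχ hSne
    have hs := hscvp' χ hχ hSne
    have hc0 : 0 < ‖∑ d ∈ DU, χ d‖ ^ 2 := by
      have := norm_pos_iff.mpr hSne
      positivity
    have harg : 0 ≤ 1 + 4 * (lam : ℝ) / ‖∑ d ∈ DU, χ d‖ ^ 2 := by positivity
    have hsq := Real.sq_sqrt harg
    rw [hs] at hsq
    have haR : (a : ℝ) ≠ 0 := Nat.cast_ne_zero.mpr ha.ne'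
    field_simp at hsq
    linear_combination hsq
  -- complex version
  have hvalC : ∀ χ : G →* ℂ, χ ≠ 1 → (∑ d ∈ DU, χ d) ≠ 0 →
      (∑ d ∈ DU, χ d) * (starRingEnd ℂ) (∑ d ∈ DU, χ d) * ((b : ℂ) ^ 2 - (a : ℂ) ^ 2)
        = 4 * (a : ℂ) ^ 2 * (lam : ℂ) := by
    intro χ hχ hSne
    have h1 := hval χ hχ hSne
    rw [Complex.mul_conj, ← Complex.sq_norm]
    exact_mod_cast congrArg (Complex.ofReal) h1
  -- dichotomy
  have hdich : ∀ χ : G →* ℂ, χ ≠ 1 → (∑ d ∈ DU, χ d) ≠ 0 →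
      (∑ d ∈ D j0, χ d) = (((a : ℂ) + b) / (2 * a)) * ∑ d ∈ DU, χ d ∨
      (∑ d ∈ D j0, χ d) = (((a : ℂ) - b) / (2 * a)) * ∑ d ∈ DU, χ d := by
    intro χ hχ hSne
    have haR : (0 : ℝ) < (a : ℝ) := by exact_mod_cast ha
    have := quadratic_roots (lam := (lam : ℝ)) (a := (a : ℝ)) (b := (b : ℝ)) haR hSne
      (by push_cast; exact chareqNP χ hχ) (hval χ hχ hSne)
    push_cast at this
    exact this

  -- the partition sets
  set T : Finset (G →* ℂ) := Finset.univ.erase 1 with hTdef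
  set Z : Finset (G →* ℂ) := T.filter (fun χ => (∑ d ∈ DU, χ d) = 0) with hZdef
  set N : Finset (G →* ℂ) := T.filter (fun χ => (∑ d ∈ DU, χ d) ≠ 0) with hNdef
  set P : Finset (G →* ℂ) := T.filter (fun χ => (∑ d ∈ DU, χ d) ≠ 0 ∧
      (∑ d ∈ D j0, χ d) = (((a : ℂ) + b) / (2 * a)) * ∑ d ∈ DU, χ d) with hPdef
  set Mq : Finset (G →* ℂ) := T.filter (fun χ => (∑ d ∈ DU, χ d) ≠ 0 ∧
      (∑ d ∈ D j0, χ d) = (((a : ℂ) - b) / (2 * a)) * ∑ d ∈ DU, χ d) with hMdef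
  have hZmem : ∀ χ : G →* ℂ, χ ∈ Z → χ ∈ T ∧ (∑ d ∈ DU, χ d) = 0 := by
    intro χ hχ
    have hχ' : χ ∈ T.filter (fun χ => (∑ d ∈ DU, χ d) = 0) := by rwa [hZdef] at hχ
    exact Finset.mem_filter.mp hχ'
  have hNmem' : ∀ χ : G →* ℂ, χ ∈ N → χ ∈ T ∧ (∑ d ∈ DU, χ d) ≠ 0 := by
    intro χ hχ
    have hχ' : χ ∈ T.filter (fun χ => (∑ d ∈ DU, χ d) ≠ 0) := by rwa [hNdef] at hχ
    exact Finset.mem_filter.mp hχ'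
  have hPmem : ∀ χ : G →* ℂ, χ ∈ P → χ ∈ T ∧ ((∑ d ∈ DU, χ d) ≠ 0 ∧
      (∑ d ∈ D j0, χ d) = (((a : ℂ) + b) / (2 * a)) * ∑ d ∈ DU, χ d) := by
    intro χ hχ
    have hχ' : χ ∈ T.filter (fun χ => (∑ d ∈ DU, χ d) ≠ 0 ∧
        (∑ d ∈ D j0, χ d) = (((a : ℂ) + b) / (2 * a)) * ∑ d ∈ DU, χ d) := by rwa [hPdef] at hχ
    exact Finset.mem_filter.mp hχ'
  have hMmem : ∀ χ : G →* ℂ, χ ∈ Mq → χ ∈ T ∧ ((∑ d ∈ DU, χ d) ≠ 0 ∧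
      (∑ d ∈ D j0, χ d) = (((a : ℂ) - b) / (2 * a)) * ∑ d ∈ DU, χ d) := by
    intro χ hχ
    have hχ' : χ ∈ T.filter (fun χ => (∑ d ∈ DU, χ d) ≠ 0 ∧
        (∑ d ∈ D j0, χ d) = (((a : ℂ) - b) / (2 * a)) * ∑ d ∈ DU, χ d) := by rwa [hMdef] at hχ
    exact Finset.mem_filter.mp hχ'
  have hTne : ∀ χ : G →* ℂ, χ ∈ T → χ ≠ 1 := by
    intro χ hχ
    have hχ' : χ ∈ Finset.univ.erase (1 : G →* ℂ) := by rwa [hTdef] at hχ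
    exact (Finset.mem_erase.mp hχ').1
  have hcards : Fintype.card (G →* ℂ) = v := by
    rw [← Nat.card_eq_fintype_card, card_char, hv]
  have hTcard : T.card = v - 1 := by
    rw [hTdef, Finset.card_erase_of_mem (Finset.mem_univ 1), Finset.card_univ, hcards]
  have hZNunion : Z ∪ N = T := by
    ext χ
    simp only [hZdef, hNdef, Finset.mem_union, Finset.mem_filter]
    tauto
  have hZNdisj : Disjoint Z N := by
    rw [Finset.disjoint_left]
    intro χ hZ hN'
    exact (hNmem' χ hN').2 (hZmem χ hZ).2
  have hZN : Z.card + N.card = v - 1 := by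
    rw [← Finset.card_union_of_disjoint hZNdisj, hZNunion, hTcard]
  have hNPM : N = P ∪ Mq := by
    ext χ
    simp only [hNdef, hPdef, hMdef, Finset.mem_filter, Finset.mem_union]
    constructor
    · rintro ⟨hT', hSne⟩
      rcases hdich χ (hTne χ hT') hSne with hd | hd
      · exact Or.inl ⟨hT', hSne, hd⟩
      · exact Or.inr ⟨hT', hSne, hd⟩
    · rintro (⟨hT', hSne, _⟩ | ⟨hT', hSne, _⟩) <;> exact ⟨hT', hSne⟩
  have hdisjPM : Disjoint P Mq := by
    rw [Finset.disjoint_left]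
    intro χ hP' hM'
    obtain ⟨_, hSne, hp⟩ := hPmem χ hP'
    obtain ⟨_, _, hmm⟩ := hMmem χ hM'
    rw [hp] at hmm
    have h1 : (((a : ℂ) + b) / (2 * a) - ((a : ℂ) - b) / (2 * a)) * (∑ d ∈ DU, χ d) = 0 := by
      rw [sub_mul, hmm]; ring
    have h2 : (((a : ℂ) + b) / (2 * a) - ((a : ℂ) - b) / (2 * a)) = (b : ℂ) / a := by
      field_simp; ring
    rw [h2] at h1
    rcases mul_eq_zero.mp h1 with h' | h'
    · rcases div_eq_zero_iff.mp h' with h'' | h''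
      · exact hbC h''
      · exact haC h''
    · exact hSne h'
  have hPMnat : P.card + Mq.card = N.card := by
    rw [hNPM, Finset.card_union_of_disjoint hdisjPM]
  -- orthogonality sums
  have hOrth1 : ∑ χ : G →* ℂ, (∑ d ∈ DU, χ d) * (starRingEnd ℂ) (∑ d ∈ DU, χ d)
      = (v : ℂ) * ((m : ℂ) * k) := by
    have h1 := orthog (G := G) DU DU
    simp_rw [sum_inv_eq_conj] at h1
    rw [Finset.inter_self, hDUcard, hv] at h1
    rw [h1]; push_cast; ring
  have hone1 : (∑ d ∈ DU, (1 : G →* ℂ) d) * (starRingEnd ℂ) (∑ d ∈ DU, (1 : G →* ℂ) d)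
      = ((m : ℂ) * k) ^ 2 := by
    rw [hSone, map_mul, map_natCast, map_natCast]; ring
  have hT2 : ∑ χ ∈ T, (∑ d ∈ DU, χ d) * (starRingEnd ℂ) (∑ d ∈ DU, χ d)
      = (v : ℂ) * ((m : ℂ) * k) - ((m : ℂ) * k) ^ 2 := by
    rw [hTdef]
    rw [Finset.sum_erase_eq_sub (Finset.mem_univ (1 : G →* ℂ))]
    rw [hOrth1]
    rw [hone1]
  have hsplit2 : ∑ χ ∈ T, (∑ d ∈ DU, χ d) * (starRingEnd ℂ) (∑ d ∈ DU, χ d)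
      = ∑ χ ∈ Z, (∑ d ∈ DU, χ d) * (starRingEnd ℂ) (∑ d ∈ DU, χ d)
      + ∑ χ ∈ N, (∑ d ∈ DU, χ d) * (starRingEnd ℂ) (∑ d ∈ DU, χ d) := by
    rw [← hZNunion, Finset.sum_union hZNdisj]
  have hZzero2 : ∑ χ ∈ Z, (∑ d ∈ DU, χ d) * (starRingEnd ℂ) (∑ d ∈ DU, χ d) = 0 := by
    refine Finset.sum_eq_zero fun χ hχ => ?_
    rw [(hZmem χ hχ).2, zero_mul]
  have hNsum2 : ∑ χ ∈ N, (∑ d ∈ DU, χ d) * (starRingEnd ℂ) (∑ d ∈ DU, χ d)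
      = (v : ℂ) * ((m : ℂ) * k) - ((m : ℂ) * k) ^ 2 := by
    rw [hsplit2, hZzero2, zero_add] at hT2
    exact hT2
  have hNmem : ∀ χ ∈ N, χ ≠ 1 ∧ (∑ d ∈ DU, χ d) ≠ 0 := by
    intro χ hχ
    obtain ⟨hT', hSne⟩ := hNmem' χ hχ
    exact ⟨hTne χ hT', hSne⟩
  have hE2 : (N.card : ℂ) * (4 * (a : ℂ) ^ 2 * lam)
      = ((v : ℂ) * ((m : ℂ) * k) - ((m : ℂ) * k) ^ 2) * ((b : ℂ) ^ 2 - (a : ℂ) ^ 2) := by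
    have h1 : ∑ χ ∈ N, ((∑ d ∈ DU, χ d) * (starRingEnd ℂ) (∑ d ∈ DU, χ d))
          * ((b : ℂ) ^ 2 - (a : ℂ) ^ 2)
        = ∑ χ ∈ N, (4 * (a : ℂ) ^ 2 * (lam : ℂ)) := by
      refine Finset.sum_congr rfl fun χ hχ => ?_
      obtain ⟨hχ1, hSne⟩ := hNmem χ hχ
      exact hvalC χ hχ1 hSne
    rw [← Finset.sum_mul, hNsum2] at h1
    rw [Finset.sum_const, nsmul_eq_mul] at h1
    linear_combination - h1
  -- second orthogonality
  have hOrth2 : ∑ χ : G →* ℂ, (∑ d ∈ D j0, χ d) * (starRingEnd ℂ) (∑ d ∈ DU, χ d)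
      = (v : ℂ) * k := by
    have h1 := orthog (G := G) (D j0) DU
    simp_rw [sum_inv_eq_conj] at h1
    rw [Finset.inter_eq_left.mpr hsub, hcard j0, hv] at h1
    rw [h1]
  have hone2 : (∑ d ∈ D j0, (1 : G →* ℂ) d) * (starRingEnd ℂ) (∑ d ∈ DU, (1 : G →* ℂ) d)
      = (k : ℂ) * ((m : ℂ) * k) := by
    rw [hS0one, hSone, map_mul, map_natCast, map_natCast]
  have hT3 : ∑ χ ∈ T, (∑ d ∈ D j0, χ d) * (starRingEnd ℂ) (∑ d ∈ DU, χ d)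
      = (v : ℂ) * k - (k : ℂ) * ((m : ℂ) * k) := by
    rw [hTdef]
    rw [Finset.sum_erase_eq_sub (Finset.mem_univ (1 : G →* ℂ))]
    rw [hOrth2]
    rw [hone2]
  have hsplit3 : ∑ χ ∈ T, (∑ d ∈ D j0, χ d) * (starRingEnd ℂ) (∑ d ∈ DU, χ d)
      = ∑ χ ∈ Z, (∑ d ∈ D j0, χ d) * (starRingEnd ℂ) (∑ d ∈ DU, χ d)
      + ∑ χ ∈ N, (∑ d ∈ D j0, χ d) * (starRingEnd ℂ) (∑ d ∈ DU, χ d) := by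
    rw [← hZNunion, Finset.sum_union hZNdisj]
  have hZzero3 : ∑ χ ∈ Z, (∑ d ∈ D j0, χ d) * (starRingEnd ℂ) (∑ d ∈ DU, χ d) = 0 := by
    refine Finset.sum_eq_zero fun χ hχ => ?_
    rw [(hZmem χ hχ).2, map_zero, mul_zero]
  have hNsum3 : ∑ χ ∈ N, (∑ d ∈ D j0, χ d) * (starRingEnd ℂ) (∑ d ∈ DU, χ d)
      = (v : ℂ) * k - (k : ℂ) * ((m : ℂ) * k) := by
    rw [hsplit3, hZzero3, zero_add] at hT3
    exact hT3
  have hE3 : ((v : ℂ) * k - (k : ℂ) * ((m : ℂ) * k)) * ((b : ℂ) ^ 2 - (a : ℂ) ^ 2) * (2 * a)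
      = (P.card : ℂ) * (((a : ℂ) + b) * (4 * (a : ℂ) ^ 2 * lam))
      + (Mq.card : ℂ) * (((a : ℂ) - b) * (4 * (a : ℂ) ^ 2 * lam)) := by
    have hPsum : ∑ χ ∈ P, ((∑ d ∈ D j0, χ d) * (starRingEnd ℂ) (∑ d ∈ DU, χ d))
          * (((b : ℂ) ^ 2 - (a : ℂ) ^ 2) * (2 * a))
        = ∑ χ ∈ P, (((a : ℂ) + b) * (4 * (a : ℂ) ^ 2 * (lam : ℂ))) := by
      refine Finset.sum_congr rfl fun χ hχ => ?_
      obtain ⟨hT', hSne, hp⟩ := hPmem χ hχ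
      have hχ1 : χ ≠ 1 := hTne χ hT'
      have h6 := hvalC χ hχ1 hSne
      have hp' : (∑ d ∈ D j0, χ d) * (2 * a) = ((a : ℂ) + b) * ∑ d ∈ DU, χ d := by
        rw [hp]; field_simp
      linear_combination ((starRingEnd ℂ) (∑ d ∈ DU, χ d)) * ((b : ℂ) ^ 2 - (a : ℂ) ^ 2) * hp'
        + ((a : ℂ) + b) * h6
    have hMsum : ∑ χ ∈ Mq, ((∑ d ∈ D j0, χ d) * (starRingEnd ℂ) (∑ d ∈ DU, χ d))
          * (((b : ℂ) ^ 2 - (a : ℂ) ^ 2) * (2 * a))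
        = ∑ χ ∈ Mq, (((a : ℂ) - b) * (4 * (a : ℂ) ^ 2 * (lam : ℂ))) := by
      refine Finset.sum_congr rfl fun χ hχ => ?_
      obtain ⟨hT', hSne, hp⟩ := hMmem χ hχ
      have hχ1 : χ ≠ 1 := hTne χ hT'
      have h6 := hvalC χ hχ1 hSne
      have hp' : (∑ d ∈ D j0, χ d) * (2 * a) = ((a : ℂ) - b) * ∑ d ∈ DU, χ d := by
        rw [hp]; field_simp
      linear_combination ((starRingEnd ℂ) (∑ d ∈ DU, χ d)) * ((b : ℂ) ^ 2 - (a : ℂ) ^ 2) * hp'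
        + ((a : ℂ) - b) * h6
    calc ((v : ℂ) * k - (k : ℂ) * ((m : ℂ) * k)) * ((b : ℂ) ^ 2 - (a : ℂ) ^ 2) * (2 * a)
        = (∑ χ ∈ N, (∑ d ∈ D j0, χ d) * (starRingEnd ℂ) (∑ d ∈ DU, χ d))
            * (((b : ℂ) ^ 2 - (a : ℂ) ^ 2) * (2 * a)) := by rw [hNsum3]; ring
      _ = ∑ χ ∈ N, ((∑ d ∈ D j0, χ d) * (starRingEnd ℂ) (∑ d ∈ DU, χ d))
            * (((b : ℂ) ^ 2 - (a : ℂ) ^ 2) * (2 * a)) := by rw [Finset.sum_mul]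
      _ = ∑ χ ∈ P, ((∑ d ∈ D j0, χ d) * (starRingEnd ℂ) (∑ d ∈ DU, χ d))
            * (((b : ℂ) ^ 2 - (a : ℂ) ^ 2) * (2 * a))
          + ∑ χ ∈ Mq, ((∑ d ∈ D j0, χ d) * (starRingEnd ℂ) (∑ d ∈ DU, χ d))
            * (((b : ℂ) ^ 2 - (a : ℂ) ^ 2) * (2 * a)) := by
            rw [hNPM, Finset.sum_union hdisjPM]
      _ = (P.card : ℂ) * (((a : ℂ) + b) * (4 * (a : ℂ) ^ 2 * lam))
          + (Mq.card : ℂ) * (((a : ℂ) - b) * (4 * (a : ℂ) ^ 2 * lam)) := by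
            rw [hPsum, hMsum, Finset.sum_const, Finset.sum_const, nsmul_eq_mul, nsmul_eq_mul]
  -- cast card relations
  have hZC : (Z.card : ℂ) = ((v : ℂ) - 1) - N.card := by
    have h1 : Z.card + N.card + 1 = v := by omega
    have h2 : ((Z.card : ℂ)) + N.card + 1 = v := by exact_mod_cast h1
    linear_combination h2
  have hPMC : (P.card : ℂ) + Mq.card = N.card := by exact_mod_cast hPMnat
  -- solve for N
  have hcanN : ((N.card : ℂ) * (4 * (a : ℂ) ^ 2 * k * ((m : ℂ) - 1))) * k
      = ((m : ℂ) * ((v : ℂ) - k * m) * ((b : ℂ) ^ 2 - (a : ℂ) ^ 2) * ((v : ℂ) - 1)) * k := by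
    linear_combination ((v : ℂ) - 1) * hE2 + (N.card : ℂ) * 4 * (a : ℂ) ^ 2 * hE4
  have hN1 : (N.card : ℂ) * (4 * (a : ℂ) ^ 2 * k * ((m : ℂ) - 1))
      = (m : ℂ) * ((v : ℂ) - k * m) * ((b : ℂ) ^ 2 - (a : ℂ) ^ 2) * ((v : ℂ) - 1) :=
    mul_right_cancel₀ hk0 hcanN
  -- intermediate for P/M
  have hPM4 : ((P.card : ℂ) * ((a : ℂ) + b) + (Mq.card : ℂ) * ((a : ℂ) - b))
        * (4 * (a : ℂ) ^ 2 * lam)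
      = ((v : ℂ) * k - (k : ℂ) * ((m : ℂ) * k)) * ((b : ℂ) ^ 2 - (a : ℂ) ^ 2) * (2 * a) := by
    linear_combination - hE3
  have hPM5 : ((P.card : ℂ) * ((a : ℂ) + b) + (Mq.card : ℂ) * ((a : ℂ) - b))
        * (4 * (a : ℂ) ^ 2) * ((k : ℂ) * ((m : ℂ) * k - k))
      = ((v : ℂ) * k - (k : ℂ) * ((m : ℂ) * k)) * ((b : ℂ) ^ 2 - (a : ℂ) ^ 2) * (2 * a)
        * ((v : ℂ) - 1) := by
    linear_combination ((v : ℂ) - 1) * hPM4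
      + ((P.card : ℂ) * ((a : ℂ) + b) + (Mq.card : ℂ) * ((a : ℂ) - b)) * 4 * (a : ℂ) ^ 2 * hE4
  have hcanP : ((P.card : ℂ) * (8 * (a : ℂ) ^ 2 * b * k * ((m : ℂ) - 1))) * k
      = (((v : ℂ) - 1) * ((v : ℂ) - k * m) * ((b : ℂ) ^ 2 - (a : ℂ) ^ 2)
          * (((b : ℂ) - a) * m + 2 * a)) * k := by
    linear_combination hPM5 + ((b : ℂ) - a) * k * hN1
      + ((b : ℂ) - a) * 4 * (a : ℂ) ^ 2 * (k : ℂ) ^ 2 * ((m : ℂ) - 1) * hPMC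
  have hP1 : (P.card : ℂ) * (8 * (a : ℂ) ^ 2 * b * k * ((m : ℂ) - 1))
      = ((v : ℂ) - 1) * ((v : ℂ) - k * m) * ((b : ℂ) ^ 2 - (a : ℂ) ^ 2)
        * (((b : ℂ) - a) * m + 2 * a) :=
    mul_right_cancel₀ hk0 hcanP
  have hcanM : ((Mq.card : ℂ) * (8 * (a : ℂ) ^ 2 * b * k * ((m : ℂ) - 1))) * k
      = (((v : ℂ) - 1) * ((v : ℂ) - k * m) * ((b : ℂ) ^ 2 - (a : ℂ) ^ 2)
          * (((b : ℂ) + a) * m - 2 * a)) * k := by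
    linear_combination (-1 : ℂ) * hPM5 + ((a : ℂ) + b) * k * hN1
      + ((a : ℂ) + b) * 4 * (a : ℂ) ^ 2 * (k : ℂ) ^ 2 * ((m : ℂ) - 1) * hPMC
  have hM1 : (Mq.card : ℂ) * (8 * (a : ℂ) ^ 2 * b * k * ((m : ℂ) - 1))
      = ((v : ℂ) - 1) * ((v : ℂ) - k * m) * ((b : ℂ) ^ 2 - (a : ℂ) ^ 2)
        * (((b : ℂ) + a) * m - 2 * a) :=
    mul_right_cancel₀ hk0 hcanM
  have hden1 : (4 : ℂ) * (a : ℂ) ^ 2 * k * ((m : ℂ) - 1) ≠ 0 := by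
    refine mul_ne_zero (mul_ne_zero (mul_ne_zero (by norm_num) (pow_ne_zero 2 haC)) hk0) hm1C
  have hden2 : (8 : ℂ) * (a : ℂ) ^ 2 * b * k * ((m : ℂ) - 1) ≠ 0 := by
    refine mul_ne_zero (mul_ne_zero (mul_ne_zero (mul_ne_zero (by norm_num)
      (pow_ne_zero 2 haC)) hbC) hk0) hm1C
  refine ⟨?_, ?_, ?_⟩
  · have e1 : Nat.card {χ : G →* ℂ // χ ≠ 1 ∧ ∑ d ∈ DU, χ d = 0}
        = (Finset.univ.filter (fun χ : G →* ℂ => χ ≠ 1 ∧ ∑ d ∈ DU, χ d = 0)).card := by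
      rw [Nat.card_eq_fintype_card]
      exact Fintype.card_subtype _
    rw [e1]
    have e2 : Finset.univ.filter (fun χ : G →* ℂ => χ ≠ 1 ∧ ∑ d ∈ DU, χ d = 0) = Z := by
      ext χ
      simp only [hZdef, hTdef, Finset.mem_filter, Finset.mem_univ, true_and, Finset.mem_erase]
      tauto
    rw [e2]
    rw [← Rat.cast_inj (α := ℂ)]
    push_cast
    have e3 : ((v : ℂ) - 1) * (1 - ((b : ℂ) ^ 2 - (a : ℂ) ^ 2) * ((v : ℂ) - k * m) * m
          / (4 * (a : ℂ) ^ 2 * k * ((m : ℂ) - 1)))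
        = (((v : ℂ) - 1) * ((4 * (a : ℂ) ^ 2 * k * ((m : ℂ) - 1))
            - ((b : ℂ) ^ 2 - (a : ℂ) ^ 2) * ((v : ℂ) - k * m) * m))
          / (4 * (a : ℂ) ^ 2 * k * ((m : ℂ) - 1)) := by
      field_simp
    rw [e3, eq_div_iff hden1]
    linear_combination (4 * (a : ℂ) ^ 2 * k * ((m : ℂ) - 1)) * hZC - hN1
  · have e1 : Nat.card {χ : G →* ℂ // χ ≠ 1 ∧ (∑ d ∈ DU, χ d) ≠ 0 ∧
          ∑ d ∈ D j0, χ d = (((a : ℂ) + b) / (2 * a)) * ∑ d ∈ DU, χ d}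
        = (Finset.univ.filter (fun χ : G →* ℂ => χ ≠ 1 ∧ (∑ d ∈ DU, χ d) ≠ 0 ∧
          ∑ d ∈ D j0, χ d = (((a : ℂ) + b) / (2 * a)) * ∑ d ∈ DU, χ d)).card := by
      rw [Nat.card_eq_fintype_card]
      exact Fintype.card_subtype _
    rw [e1]
    have e2 : Finset.univ.filter (fun χ : G →* ℂ => χ ≠ 1 ∧ (∑ d ∈ DU, χ d) ≠ 0 ∧
          ∑ d ∈ D j0, χ d = (((a : ℂ) + b) / (2 * a)) * ∑ d ∈ DU, χ d) = P := by
      ext χ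
      simp only [hPdef, hTdef, Finset.mem_filter, Finset.mem_univ, true_and, Finset.mem_erase]
      tauto
    rw [e2]
    rw [← Rat.cast_inj (α := ℂ)]
    push_cast
    rw [eq_div_iff hden2]
    linear_combination hP1
  · have e1 : Nat.card {χ : G →* ℂ // χ ≠ 1 ∧ (∑ d ∈ DU, χ d) ≠ 0 ∧
          ∑ d ∈ D j0, χ d = (((a : ℂ) - b) / (2 * a)) * ∑ d ∈ DU, χ d}
        = (Finset.univ.filter (fun χ : G →* ℂ => χ ≠ 1 ∧ (∑ d ∈ DU, χ d) ≠ 0 ∧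
          ∑ d ∈ D j0, χ d = (((a : ℂ) - b) / (2 * a)) * ∑ d ∈ DU, χ d)).card := by
      rw [Nat.card_eq_fintype_card]
      exact Fintype.card_subtype _
    rw [e1]
    have e2 : Finset.univ.filter (fun χ : G →* ℂ => χ ≠ 1 ∧ (∑ d ∈ DU, χ d) ≠ 0 ∧
          ∑ d ∈ D j0, χ d = (((a : ℂ) - b) / (2 * a)) * ∑ d ∈ DU, χ d) = Mq := by
      ext χ
      simp only [hMdef, hTdef, Finset.mem_filter, Finset.mem_univ, true_and, Finset.mem_erase]
      tauto
    rw [e2]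
    rw [← Rat.cast_inj (α := ℂ)]
    push_cast
    rw [eq_div_iff hden2]
    linear_combination hM1
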